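/- Let (G,m,w,B) be a connected weighted finite graph with boundary. The equalities μ_i(Ω) + min_{x∈Ω} Deg_b(x) = λ_i = μ_i(Ω) + max_{x∈Ω} Deg_b(x) hold for every i = 1, 2, …, |Ω| if and only if Deg_b(x) is independent of x ∈ Ω (i.e., Deg_b is constant on Ω). -/

import Mathlib

open Finset

noncomputable section

/-- The weighted graph Laplacian `Δ`. -/
def glap {V : Type*} [Fintype V] (m : V → ℝ) (w : V → V → ℝ) (u : V → ℝ) (x : V) : ℝ :=
  (1 / m x) * ∑ y, (u y - u x) * w x y

/-- Extension by zero to the boundary. -/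
def E0 {V : Type*} [DecidableEq V] (B : Finset V) (u : {x : V // x ∉ B} → ℝ) (x : V) : ℝ :=
  if h : x ∈ B then 0 else u ⟨x, h⟩

/-- The normal extension. -/
def N0 {V : Type*} [Fintype V] [DecidableEq V] (w : V → V → ℝ) (B : Finset V)
    (u : {x : V // x ∉ B} → ℝ) (x : V) : ℝ :=
  if h : x ∈ B then
    (∑ y : {x : V // x ∉ B}, u y * w x y.1) / (∑ y : {x : V // x ∉ B}, w x y.1)
  else u ⟨x, h⟩

/-- The Dirichlet Laplacian `Δ^D`. -/
def dlap {V : Type*} [Fintype V] [DecidableEq V] (m : V → ℝ) (w : V → V → ℝ) (B : Finset V)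
    (u : {x : V // x ∉ B} → ℝ) (x : {x : V // x ∉ B}) : ℝ :=
  glap m w (E0 B u) x.1

/-- The Neumann Laplacian `Δ^N`. -/
def nlap {V : Type*} [Fintype V] [DecidableEq V] (m : V → ℝ) (w : V → V → ℝ) (B : Finset V)
    (u : {x : V // x ∉ B} → ℝ) (x : {x : V // x ∉ B}) : ℝ :=
  glap m w (N0 w B u) x.1

/-- The Laplacian `Δ_Ω` of the induced interior subgraph. -/
def olap {V : Type*} [Fintype V] [DecidableEq V] (m : V → ℝ) (w : V → V → ℝ) (B : Finset V)
    (u : {x : V // x ∉ B} → ℝ) (x : {x : V // x ∉ B}) : ℝ :=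
  (1 / m x.1) * ∑ y : {x : V // x ∉ B}, (u y - u x) * w x.1 y.1

/-- The weighted boundary vertex degree `Deg_b`. -/
def degb {V : Type*} [DecidableEq V] (m : V → ℝ) (w : V → V → ℝ) (B : Finset V) (x : V) : ℝ :=
  (1 / m x) * ∑ y ∈ B, w x y

/-- The operator `T = A_B ∘ Deg⁻¹ ∘ A_Ω`. -/
def bop {V : Type*} [Fintype V] [DecidableEq V] (m : V → ℝ) (w : V → V → ℝ) (B : Finset V)
    (u : {x : V // x ∉ B} → ℝ) (z : {x : V // x ∉ B}) : ℝ :=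
  (1 / m z.1) * ∑ x ∈ B, w x z.1 *
    ((∑ y : {x : V // x ∉ B}, u y * w x y.1) / (∑ y : {x : V // x ∉ B}, w x y.1))

/-- The Bakry–Émery `Γ` operator of a Laplacian-type operator `L`. -/
def gam {W : Type*} (L : (W → ℝ) → (W → ℝ)) (f g : W → ℝ) (x : W) : ℝ :=
  (L (fun y => f y * g y) x - f x * L g x - g x * L f x) / 2

/-- The Bakry–Émery `Γ₂` operator of a Laplacian-type operator `L`. -/
def gam2 {W : Type*} (L : (W → ℝ) → (W → ℝ)) (f : W → ℝ) (x : W) : ℝ :=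
  L (gam L f f) x / 2 - gam L f (L f) x

/-- `e` is a complete list of the eigenvalues of `L` : there is a corresponding eigenbasis
which is orthonormal with respect to the inner product weighted by `m`. -/
def IsEigenBasis {n : ℕ} {W : Type*} [Fintype W] (m : W → ℝ)
    (L : (W → ℝ) → (W → ℝ)) (e : Fin n → ℝ) : Prop :=
  ∃ φ : Fin n → W → ℝ,
    (∀ i j, (∑ x, φ i x * φ j x * m x) = if i = j then 1 else 0) ∧
    ∀ i, L (φ i) = fun x => e i * φ i x

-- auxiliary lemmas to be inserted
section Aux

open Finset

private lemma monotone_eq_of_counts {n : ℕ} {g h : Fin n → ℝ} (hg : Monotone g) (hh : Monotone h)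
    (hc : ∀ t : ℝ, (univ.filter (fun i => g i = t)).card = (univ.filter (fun i => h i = t)).card) :
    g = h := by
  classical
  have hM : Multiset.map g Finset.univ.val = Multiset.map h Finset.univ.val := by
    ext t
    rw [Multiset.count_map, Multiset.count_map]
    have hcv : ∀ (k : Fin n → ℝ),
        Multiset.card (Multiset.filter (fun a => t = k a) Finset.univ.val)
          = (Finset.univ.filter (fun i => k i = t)).card := by
      intro k
      rw [Finset.card_def, Finset.filter_val]
      congr 1
      simp [eq_comm]
    rw [hcv g, hcv h, hc t]
  have hperm : List.Perm (List.ofFn g) (List.ofFn h) := by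
    rw [← Multiset.coe_eq_coe, ← Fin.univ_val_map, ← Fin.univ_val_map]
    exact hM
  have : List.ofFn g = List.ofFn h :=
    List.Perm.eq_of_sortedLE hg.sortedLE_ofFn hh.sortedLE_ofFn hperm
  exact List.ofFn_injective this

private lemma count_le {n : ℕ} (C : Fin n → Fin n → ℝ) (e f : Fin n → ℝ)
    (hrow : ∀ j, ∑ i, (C j i) ^ 2 = 1)
    (hcol : ∀ i, ∑ j, (C j i) ^ 2 = 1)
    (hef : ∀ i j, e i ≠ f j → C j i = 0) (t : ℝ) :
    (univ.filter (fun j => f j = t)).card ≤ (univ.filter (fun i => e i = t)).card := by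
  classical
  set S := univ.filter (fun i : Fin n => e i = t) with hS
  set T := univ.filter (fun j : Fin n => f j = t) with hT
  have key : (T.card : ℝ) ≤ (S.card : ℝ) := by
    calc (T.card : ℝ) = ∑ j ∈ T, ∑ i, (C j i) ^ 2 := by simp [hrow]
      _ = ∑ j ∈ T, ∑ i ∈ S, (C j i) ^ 2 := by
          refine Finset.sum_congr rfl fun j hj => ?_
          symm
          apply Finset.sum_subset (Finset.subset_univ S)
          intro i _ hiS
          have hit : e i ≠ t := by
            simp only [hS, Finset.mem_filter, Finset.mem_univ, true_and] at hiS
            exact hiS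
          have hjt : f j = t := by
            simp only [hT, Finset.mem_filter, Finset.mem_univ, true_and] at hj
            exact hj
          rw [hef i j (by rw [hjt]; exact hit)]
          ring
      _ ≤ ∑ j ∈ univ, ∑ i ∈ S, (C j i) ^ 2 := by
          apply Finset.sum_le_sum_of_subset_of_nonneg (Finset.subset_univ T)
          intros
          positivity
      _ = ∑ i ∈ S, ∑ j, (C j i) ^ 2 := Finset.sum_comm
      _ = (S.card : ℝ) := by simp [hcol]
  exact_mod_cast key

private lemma onb_complete {W : Type*} [Fintype W] [DecidableEq W] {m : W → ℝ} (hm : ∀ x, 0 < m x)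
    {φ : Fin (Fintype.card W) → W → ℝ}
    (horth : ∀ i j, (∑ x, φ i x * φ j x * m x) = if i = j then 1 else 0) (x y : W) :
    (∑ i, φ i x * φ i y) = if x = y then 1 / m x else 0 := by
  classical
  let eqv : W ≃ Fin (Fintype.card W) := Fintype.equivFinOfCardEq rfl
  let P : Matrix (Fin (Fintype.card W)) (Fin (Fintype.card W)) ℝ := fun i k => φ i (eqv.symm k) * Real.sqrt (m (eqv.symm k))
  have hPPT : P * P.transpose = 1 := by
    ext i j
    rw [Matrix.mul_apply]
    have hterm : ∀ k, P i k * P.transpose k j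
        = φ i (eqv.symm k) * φ j (eqv.symm k) * m (eqv.symm k) := by
      intro k
      simp only [Matrix.transpose_apply]
      simp only [P]
      rw [show φ i (eqv.symm k) * Real.sqrt (m (eqv.symm k)) *
            (φ j (eqv.symm k) * Real.sqrt (m (eqv.symm k)))
          = φ i (eqv.symm k) * φ j (eqv.symm k) *
            (Real.sqrt (m (eqv.symm k)) * Real.sqrt (m (eqv.symm k))) from by ring,
        Real.mul_self_sqrt (hm _).le]
    rw [Finset.sum_congr rfl fun k _ => hterm k]
    rw [Equiv.sum_comp eqv.symm (fun z => φ i z * φ j z * m z), horth i j]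
    simp [Matrix.one_apply]
  have hPTP : P.transpose * P = 1 := mul_eq_one_comm.mp hPPT
  have hval : (∑ i, φ i x * φ i y) * (Real.sqrt (m x) * Real.sqrt (m y))
      = if x = y then 1 else 0 := by
    have h1 : (P.transpose * P) (eqv x) (eqv y)
        = (1 : Matrix (Fin (Fintype.card W)) (Fin (Fintype.card W)) ℝ) (eqv x) (eqv y) := by
      rw [hPTP]
    rw [Matrix.mul_apply] at h1
    have h2 : ∀ i, P.transpose (eqv x) i * P i (eqv y)
        = φ i x * φ i y * (Real.sqrt (m x) * Real.sqrt (m y)) := by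
      intro i
      simp only [Matrix.transpose_apply]
      simp only [P, Equiv.symm_apply_apply]
      ring
    rw [Finset.sum_congr rfl fun i _ => h2 i, ← Finset.sum_mul] at h1
    rw [h1, Matrix.one_apply]
    simp [EmbeddingLike.apply_eq_iff_eq]
  by_cases hxy : x = y
  · subst hxy
    rw [if_pos rfl] at hval ⊢
    rw [Real.mul_self_sqrt (hm x).le] at hval
    rw [eq_div_iff (hm x).ne']
    exact hval
  · rw [if_neg hxy] at hval ⊢
    rcases mul_eq_zero.mp hval with h | h
    · exact h
    · exact absurd h (mul_pos (Real.sqrt_pos.mpr (hm x)) (Real.sqrt_pos.mpr (hm y))).ne'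

private lemma onb_cross_sum {W : Type*} [Fintype W] [DecidableEq W] {m : W → ℝ} (hm : ∀ x, 0 < m x)
    {φ ψ : Fin (Fintype.card W) → W → ℝ}
    (hφo : ∀ i j, (∑ x, φ i x * φ j x * m x) = if i = j then 1 else 0)
    (hψo : ∀ i j, (∑ x, ψ i x * ψ j x * m x) = if i = j then 1 else 0)
    (j : Fin (Fintype.card W)) :
    ∑ i, (∑ x, ψ j x * φ i x * m x) ^ 2 = 1 := by
  classical
  have hcomp := onb_complete hm hφo
  calc ∑ i, (∑ x, ψ j x * φ i x * m x) ^ 2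
      = ∑ i, ∑ x, ∑ y, (ψ j x * φ i x * m x) * (ψ j y * φ i y * m y) := by
        refine Finset.sum_congr rfl fun i _ => ?_
        rw [sq, Finset.sum_mul_sum]
    _ = ∑ x, ∑ y, (ψ j x * m x) * (ψ j y * m y) * (∑ i, φ i x * φ i y) := by
        rw [Finset.sum_comm]
        refine Finset.sum_congr rfl fun x _ => ?_
        rw [Finset.sum_comm]
        refine Finset.sum_congr rfl fun y _ => ?_
        rw [Finset.mul_sum]
        refine Finset.sum_congr rfl fun i _ => ?_
        ring
    _ = ∑ x, (ψ j x * m x) * (ψ j x * m x) * (1 / m x) := by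
        refine Finset.sum_congr rfl fun x _ => ?_
        calc ∑ y, (ψ j x * m x) * (ψ j y * m y) * (∑ i, φ i x * φ i y)
            = ∑ y, if x = y then (ψ j x * m x) * (ψ j y * m y) * (1 / m x) else 0 := by
              refine Finset.sum_congr rfl fun y _ => ?_
              rw [hcomp x y]
              by_cases hxy : x = y <;> simp [hxy]
          _ = (ψ j x * m x) * (ψ j x * m x) * (1 / m x) := by
              rw [Finset.sum_ite_eq]
              simp
    _ = ∑ x, ψ j x * ψ j x * m x := by
        refine Finset.sum_congr rfl fun x _ => ?_
        have hx := (hm x).ne'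
        field_simp
    _ = 1 := by rw [hψo j j, if_pos rfl]

private lemma eig_count_le {W : Type*} [Fintype W] [DecidableEq W] {m : W → ℝ} (hm : ∀ x, 0 < m x)
    {L : (W → ℝ) → (W → ℝ)}
    (hsym : ∀ u v : W → ℝ, ∑ x, L u x * v x * m x = ∑ x, u x * L v x * m x)
    {e f : Fin (Fintype.card W) → ℝ}
    (he : IsEigenBasis m L e) (hf : IsEigenBasis m L f) (t : ℝ) :
    (univ.filter (fun j => f j = t)).card ≤ (univ.filter (fun i => e i = t)).card := by
  classical
  obtain ⟨φ, hφo, hφe⟩ := he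
  obtain ⟨ψ, hψo, hψe⟩ := hf
  set C : Fin (Fintype.card W) → Fin (Fintype.card W) → ℝ :=
    fun j i => ∑ x, ψ j x * φ i x * m x with hC
  apply count_le C e f
  · intro j
    exact onb_cross_sum hm hφo hψo j
  · intro i
    have h := onb_cross_sum hm hψo hφo i
    calc ∑ j, (C j i) ^ 2 = ∑ j, (∑ x, φ i x * ψ j x * m x) ^ 2 := by
          refine Finset.sum_congr rfl fun j _ => ?_
          congr 1
          exact Finset.sum_congr rfl fun x _ => by ring
      _ = 1 := h
  · intro i j hne
    have h1 : f j * C j i = e i * C j i := by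
      calc f j * C j i = ∑ x, (f j * ψ j x) * φ i x * m x := by
            rw [hC, Finset.mul_sum]
            exact Finset.sum_congr rfl fun x _ => by ring
        _ = ∑ x, L (ψ j) x * φ i x * m x := by simp only [hψe j]
        _ = ∑ x, ψ j x * L (φ i) x * m x := hsym _ _
        _ = ∑ x, ψ j x * (e i * φ i x) * m x := by simp only [hφe i]
        _ = e i * C j i := by
            rw [hC, Finset.mul_sum]
            exact Finset.sum_congr rfl fun x _ => by ring
    have h2 : (f j - e i) * C j i = 0 := by rw [sub_mul, h1, sub_self]
    exact (mul_eq_zero.mp h2).resolve_left (sub_ne_zero.mpr (Ne.symm hne))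

private lemma eig_counts_eq {W : Type*} [Fintype W] [DecidableEq W] {m : W → ℝ} (hm : ∀ x, 0 < m x)
    {L : (W → ℝ) → (W → ℝ)}
    (hsym : ∀ u v : W → ℝ, ∑ x, L u x * v x * m x = ∑ x, u x * L v x * m x)
    {e f : Fin (Fintype.card W) → ℝ}
    (he : IsEigenBasis m L e) (hf : IsEigenBasis m L f) (t : ℝ) :
    (univ.filter (fun j => e j = t)).card = (univ.filter (fun j => f j = t)).card :=
  le_antisymm (eig_count_le hm hsym hf he t) (eig_count_le hm hsym he hf t)

private lemma olap_symm {V : Type*} [Fintype V] [DecidableEq V] (m : V → ℝ) (hm : ∀ x, 0 < m x)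
    (w : V → V → ℝ) (hws : ∀ x y, w x y = w y x) (B : Finset V) (u v : {x : V // x ∉ B} → ℝ) :
    ∑ x : {x : V // x ∉ B}, olap m w B u x * v x * m x.1
      = ∑ x : {x : V // x ∉ B}, u x * olap m w B v x * m x.1 := by
  have h1 : ∀ x : {x : V // x ∉ B},
      olap m w B u x * v x * m x.1 = ∑ y : {x : V // x ∉ B}, (u y - u x) * w x.1 y.1 * v x := by
    intro x
    have hx : m x.1 ≠ 0 := (hm x.1).ne'
    rw [olap]
    calc (1 / m x.1 * ∑ y : {x : V // x ∉ B}, (u y - u x) * w x.1 y.1) * v x * m x.1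
        = (∑ y : {x : V // x ∉ B}, (u y - u x) * w x.1 y.1) * v x * (1 / m x.1 * m x.1) := by ring
      _ = (∑ y : {x : V // x ∉ B}, (u y - u x) * w x.1 y.1) * v x := by
          rw [one_div_mul_cancel hx, mul_one]
      _ = ∑ y : {x : V // x ∉ B}, (u y - u x) * w x.1 y.1 * v x := Finset.sum_mul _ _ _
  have h2 : ∀ x : {x : V // x ∉ B},
      u x * olap m w B v x * m x.1 = ∑ y : {x : V // x ∉ B}, (v y - v x) * w x.1 y.1 * u x := by
    intro x
    have hx : m x.1 ≠ 0 := (hm x.1).ne'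
    rw [olap]
    calc u x * (1 / m x.1 * ∑ y : {x : V // x ∉ B}, (v y - v x) * w x.1 y.1) * m x.1
        = (∑ y : {x : V // x ∉ B}, (v y - v x) * w x.1 y.1) * u x * (1 / m x.1 * m x.1) := by ring
      _ = (∑ y : {x : V // x ∉ B}, (v y - v x) * w x.1 y.1) * u x := by
          rw [one_div_mul_cancel hx, mul_one]
      _ = ∑ y : {x : V // x ∉ B}, (v y - v x) * w x.1 y.1 * u x := Finset.sum_mul _ _ _
  rw [Finset.sum_congr rfl fun x _ => h1 x, Finset.sum_congr rfl fun x _ => h2 x]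
  have expand1 : ∀ x y : {x : V // x ∉ B},
      (u y - u x) * w x.1 y.1 * v x = u y * w x.1 y.1 * v x - u x * w x.1 y.1 * v x :=
    fun x y => by ring
  have expand2 : ∀ x y : {x : V // x ∉ B},
      (v y - v x) * w x.1 y.1 * u x = u x * w x.1 y.1 * v y - u x * w x.1 y.1 * v x :=
    fun x y => by ring
  rw [Finset.sum_congr rfl fun x _ => Finset.sum_congr rfl fun y _ => expand1 x y,
    Finset.sum_congr rfl fun x _ => Finset.sum_congr rfl fun y _ => expand2 x y]
  simp only [Finset.sum_sub_distrib]
  congr 1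
  rw [Finset.sum_comm]
  refine Finset.sum_congr rfl fun x _ => Finset.sum_congr rfl fun y _ => ?_
  rw [hws y.1 x.1]

private lemma dlap_eq_olap {V : Type*} [Fintype V] [DecidableEq V] (m : V → ℝ)
    (w : V → V → ℝ) (B : Finset V) (u : {x : V // x ∉ B} → ℝ) (x : {x : V // x ∉ B}) :
    dlap m w B u x = olap m w B u x - degb m w B x.1 * u x := by
  classical
  have hx : E0 B u x.1 = u x := by rw [E0, dif_neg x.2]
  rw [dlap, glap, olap, degb,
    ← Finset.sum_add_sum_compl B (fun y => (E0 B u y - E0 B u x.1) * w x.1 y)]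
  have hBsum : ∑ y ∈ B, (E0 B u y - E0 B u x.1) * w x.1 y = ∑ y ∈ B, -(u x * w x.1 y) := by
    refine Finset.sum_congr rfl fun y hy => ?_
    rw [hx, E0, dif_pos hy]
    ring
  have hCsum : ∑ y ∈ Bᶜ, (E0 B u y - E0 B u x.1) * w x.1 y
      = ∑ y : {x : V // x ∉ B}, (u y - u x) * w x.1 y.1 := by
    rw [Finset.sum_subtype Bᶜ (fun y => Finset.mem_compl)
      (fun y => (E0 B u y - E0 B u x.1) * w x.1 y)]
    refine Finset.sum_congr rfl fun y _ => ?_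
    rw [hx, E0, dif_neg y.2]
  rw [hBsum, hCsum, Finset.sum_neg_distrib, ← Finset.mul_sum]
  ring

end Aux

theorem stmt_6 {V : Type*} [Fintype V] [DecidableEq V]
    (G : SimpleGraph V) (hconn : G.Connected)
    (m : V → ℝ) (hm : ∀ x, 0 < m x)
    (w : V → V → ℝ) (hwsymm : ∀ x y, w x y = w y x)
    (hwpos : ∀ x y, G.Adj x y → 0 < w x y)
    (hw0 : ∀ x y, ¬ G.Adj x y → w x y = 0)
    (B : Finset V) (hB : B.Nonempty)
    (hBB : ∀ x ∈ B, ∀ y ∈ B, ¬ G.Adj x y)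
    (hBint : ∀ x ∈ B, ∃ y, y ∉ B ∧ G.Adj x y)
    (lam : Fin (Fintype.card {x : V // x ∉ B}) → ℝ) (hlammono : Monotone lam)
    (hlam : IsEigenBasis (fun x : {x : V // x ∉ B} => m x.1) (dlap m w B) (fun i => -(lam i)))
    (μΩ : Fin (Fintype.card {x : V // x ∉ B}) → ℝ) (hμΩmono : Monotone μΩ)
    (hμΩ : IsEigenBasis (fun x : {x : V // x ∉ B} => m x.1) (olap m w B) (fun i => -(μΩ i)))
    :
    (∀ i : Fin (Fintype.card {x : V // x ∉ B}),
        μΩ i + (⨅ x : {x : V // x ∉ B}, degb m w B x.1) = lam i ∧ lam i = μΩ i + (⨆ x : {x : V // x ∉ B}, degb m w B x.1)) ↔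
      (∀ x y : {x : V // x ∉ B}, degb m w B x.1 = degb m w B y.1) := by
  classical
  constructor
  · intro h x y
    haveI hne : Nonempty {x : V // x ∉ B} := ⟨x⟩
    have hcard : 0 < Fintype.card {x : V // x ∉ B} := Fintype.card_pos
    obtain ⟨h1, h2⟩ := h ⟨0, hcard⟩
    have hinfsup : (⨅ z : {x : V // x ∉ B}, degb m w B z.1)
        = (⨆ z : {x : V // x ∉ B}, degb m w B z.1) := by linarith
    have hbdda : BddAbove (Set.range fun z : {x : V // x ∉ B} => degb m w B z.1) :=
      Set.Finite.bddAbove (Set.finite_range _)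
    have hbddb : BddBelow (Set.range fun z : {x : V // x ∉ B} => degb m w B z.1) :=
      Set.Finite.bddBelow (Set.finite_range _)
    have hx1 := ciInf_le hbddb x
    have hx2 := le_ciSup hbdda x
    have hy1 := ciInf_le hbddb y
    have hy2 := le_ciSup hbdda y
    linarith
  · intro h i
    have hcard : 0 < Fintype.card {x : V // x ∉ B} := lt_of_le_of_lt (Nat.zero_le _) i.isLt
    haveI hne : Nonempty {x : V // x ∉ B} := Fintype.card_pos_iff.mp hcard
    obtain ⟨x₀⟩ := hne
    haveI : Nonempty {x : V // x ∉ B} := ⟨x₀⟩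
    set c := degb m w B x₀.1 with hcdef
    have hc : ∀ z : {x : V // x ∉ B}, degb m w B z.1 = c := fun z => h z x₀
    have hbdda : BddAbove (Set.range fun z : {x : V // x ∉ B} => degb m w B z.1) :=
      Set.Finite.bddAbove (Set.finite_range _)
    have hbddb : BddBelow (Set.range fun z : {x : V // x ∉ B} => degb m w B z.1) :=
      Set.Finite.bddBelow (Set.finite_range _)
    have hinf : (⨅ z : {x : V // x ∉ B}, degb m w B z.1) = c :=
      le_antisymm (ciInf_le hbddb x₀) (le_ciInf fun z => (hc z).ge)
    have hsup : (⨆ z : {x : V // x ∉ B}, degb m w B z.1) = c :=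
      le_antisymm (ciSup_le fun z => (hc z).le) (le_ciSup hbdda x₀)
    have hmain : lam = fun j => μΩ j + c := by
      obtain ⟨ψ, hψo, hψe⟩ := hlam
      have hψe' : ∀ j, olap m w B (ψ j) = fun z => -(lam j - c) * ψ j z := by
        intro j
        funext z
        have hz := congrFun (hψe j) z
        rw [dlap_eq_olap, hc z] at hz
        have : olap m w B (ψ j) z - c * ψ j z = -lam j * ψ j z := hz
        linarith [this]
      have hEB : IsEigenBasis (fun x : {x : V // x ∉ B} => m x.1) (olap m w B)
          (fun j => -(lam j - c)) := ⟨ψ, hψo, hψe'⟩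
      have hmpos : ∀ z : {x : V // x ∉ B}, 0 < (fun x : {x : V // x ∉ B} => m x.1) z :=
        fun z => hm z.1
      have hsym : ∀ u v : {x : V // x ∉ B} → ℝ,
          ∑ x, olap m w B u x * v x * (fun x : {x : V // x ∉ B} => m x.1) x
            = ∑ x, u x * olap m w B v x * (fun x : {x : V // x ∉ B} => m x.1) x :=
        fun u v => olap_symm m hm w hwsymm B u v
      have hcount := fun t => eig_counts_eq hmpos hsym hEB hμΩ t
      refine monotone_eq_of_counts hlammono (fun a b hab => by
        simpa using add_le_add_right (hμΩmono hab) c) ?_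
      intro t
      have e1 : Finset.univ.filter (fun j => lam j = t)
          = Finset.univ.filter (fun j => -(lam j - c) = c - t) := by
        refine Finset.filter_congr fun j _ => ?_
        constructor <;> intro hj <;> linarith
      have e2 : Finset.univ.filter (fun j => μΩ j + c = t)
          = Finset.univ.filter (fun j => -(μΩ j) = c - t) := by
        refine Finset.filter_congr fun j _ => ?_
        constructor <;> intro hj <;> linarith
      rw [e1, e2]
      exact hcount (c - t)
    constructor
    · rw [hinf, hmain]
    · rw [hsup, hmain]
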